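/- If for every article j with y^{(β)}(j) > 0 in the optimal fractional KPH solution of capacity β we have P[algorithm reads j completely] ≥ p, and the hints satisfy h_i ≤ C·(Σ_{j=1}^{t_i} c_i(j))/t_i, then Opt(I) ≤ Opt_KPH(I) ≤ (1/g)·Opt_KPH(I'_g) ≤ (1/(gβ))·Σ_i t_i·h_i·y^{(β)}(i) ≤ (C/(gβp))·E[algorithm's information gain]. -/

import Mathlib

/-- **main inequality chain of the Threshold Algorithm analysis.**
With `I'_g` the instance cut at length `g·T`, `yβ` the optimal fractional KPH solution
of `I'_g` at capacity `β·T`, `p` a lower bound on the probability that the algorithm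
reads each article `j` with `yβ j > 0` completely, and `C`-accurate hints for the cut
instance (`t' i · h i ≤ C · infoCut i`), one has
`Opt(I) ≤ Opt_KPH(I) ≤ Opt_KPH(I'_g)/g ≤ (1/(gβ))·Σ t' i · h i · yβ i
  ≤ (C/(gβp))·E[algorithm's information gain]`. -/
theorem threshold_inequality_chain (n T : ℕ) (hT : 0 < T)
    (t h : Fin n → ℕ) (c : Fin n → ℕ → ℕ) (g β p C : ℝ)
    (hg : 0 < g) (hg1 : g ≤ 1) (hβ : 0 < β) (hβ1 : β ≤ 1) (hp : 0 < p) (hC : 0 < C)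
    (htpos : ∀ i, 0 < t i) (htT : ∀ i, t i ≤ T)
    (hcod : ∀ i j, c i j ≤ h i)
    (t' : Fin n → ℝ) (ht' : ∀ i, t' i = min (t i : ℝ) (g * T))
    (infoCut : Fin n → ℝ) (hinfo : ∀ i, 0 ≤ infoCut i)
    -- C-accuracy of the hints on the cut instance
    (hacc : ∀ i, t' i * (h i : ℝ) ≤ C * infoCut i)
    (OptI OKPH OKPH' : ℝ)
    -- offline RAO optimum of I
    (hOptI : IsGreatest {v : ℝ | ∃ τ : Fin n → ℕ, (∀ i, τ i ≤ t i) ∧ (∑ i, τ i ≤ T) ∧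
        v = ∑ i, ∑ j ∈ Finset.Icc 1 (τ i), (c i j : ℝ)} OptI)
    -- fractional KPH optimum of I
    (hOKPH : IsGreatest {v : ℝ | ∃ y : Fin n → ℝ, (∀ i, y i ∈ Set.Icc (0:ℝ) 1) ∧
        ∑ i, (t i : ℝ) * y i ≤ T ∧ v = ∑ i, (t i : ℝ) * (h i : ℝ) * y i} OKPH)
    -- fractional KPH optimum of the cut instance I'_g
    (hOKPH' : IsGreatest {v : ℝ | ∃ y : Fin n → ℝ, (∀ i, y i ∈ Set.Icc (0:ℝ) 1) ∧
        ∑ i, t' i * y i ≤ T ∧ v = ∑ i, t' i * (h i : ℝ) * y i} OKPH')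
    -- yβ : optimal fractional KPH solution of I'_g at capacity β·T
    (yβ : Fin n → ℝ)
    (hyβ01 : ∀ i, yβ i ∈ Set.Icc (0:ℝ) 1) (hyβw : ∑ i, t' i * yβ i ≤ β * T)
    (hyβopt : ∀ y : Fin n → ℝ, (∀ i, y i ∈ Set.Icc (0:ℝ) 1) →
      (∑ i, t' i * y i ≤ β * T) → ∑ i, t' i * (h i : ℝ) * y i ≤ ∑ i, t' i * (h i : ℝ) * yβ i)
    -- the algorithm, as a finite probability space with the set of fully read articles
    (Ω : Type*) [Fintype Ω] (w : Ω → ℝ) (hw : ∀ ω, 0 ≤ w ω) (hw1 : ∑ ω, w ω = 1)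
    (comp : Ω → Finset (Fin n))
    (hp' : ∀ i, 0 < yβ i → p ≤ ∑ ω ∈ Finset.univ.filter (fun ω => i ∈ comp ω), w ω) :
    OptI ≤ OKPH ∧
    OKPH ≤ OKPH' / g ∧
    OKPH' / g ≤ (1 / (g * β)) * ∑ i, t' i * (h i : ℝ) * yβ i ∧
    (1 / (g * β)) * (∑ i, t' i * (h i : ℝ) * yβ i) ≤
      (C / (g * β * p)) * ∑ ω, w ω * ∑ i ∈ comp ω, infoCut i :=  by
  have ht'le : ∀ i, t' i ≤ (t i : ℝ) := fun i => by rw [ht' i]; exact min_le_left _ _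
  have ht'ge : ∀ i, g * (t i : ℝ) ≤ t' i := fun i => by
    rw [ht' i]
    have h1 : (0:ℝ) < (t i : ℝ) := by exact_mod_cast htpos i
    have h2 : (t i : ℝ) ≤ (T : ℝ) := by exact_mod_cast htT i
    refine le_min ?_ ?_
    · nlinarith
    · nlinarith
  have ht'pos : ∀ i, 0 < t' i := fun i => lt_of_lt_of_le
    (mul_pos hg (by exact_mod_cast htpos i)) (ht'ge i)
  -- Part 1
  obtain ⟨⟨τ, hτle, hτT, hval⟩, _⟩ := hOptI
  have part1 : OptI ≤ OKPH := by
    set y : Fin n → ℝ := fun i => (τ i : ℝ) / (t i : ℝ) with hy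
    have hy01 : ∀ i, y i ∈ Set.Icc (0:ℝ) 1 := by
      intro i
      have h1 : (0:ℝ) < (t i : ℝ) := by exact_mod_cast htpos i
      constructor
      · positivity
      · rw [div_le_one h1]; exact_mod_cast hτle i
    have hty : ∀ i, (t i : ℝ) * y i = (τ i : ℝ) := by
      intro i
      have h1 : (t i : ℝ) ≠ 0 := by exact_mod_cast (htpos i).ne'
      simp only [hy]; field_simp
    have hfeas : ∑ i, (t i : ℝ) * y i ≤ (T:ℝ) := by
      calc ∑ i, (t i : ℝ) * y i = ∑ i, (τ i : ℝ) := by simp [hty]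
        _ ≤ (T:ℝ) := by exact_mod_cast hτT
    have hmem : (∑ i, (t i : ℝ) * (h i : ℝ) * y i) ∈
        {v : ℝ | ∃ y : Fin n → ℝ, (∀ i, y i ∈ Set.Icc (0:ℝ) 1) ∧
        ∑ i, (t i : ℝ) * y i ≤ T ∧ v = ∑ i, (t i : ℝ) * (h i : ℝ) * y i} :=
      ⟨y, hy01, hfeas, rfl⟩
    have hle : OptI ≤ ∑ i, (t i : ℝ) * (h i : ℝ) * y i := by
      rw [hval]
      refine Finset.sum_le_sum fun i _ => ?_
      have hsum : ∑ j ∈ Finset.Icc 1 (τ i), (c i j : ℝ) ≤ (τ i : ℝ) * (h i : ℝ) := by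
        calc ∑ j ∈ Finset.Icc 1 (τ i), (c i j : ℝ)
            ≤ ∑ j ∈ Finset.Icc 1 (τ i), (h i : ℝ) :=
              Finset.sum_le_sum fun j _ => by exact_mod_cast hcod i j
          _ = (τ i : ℝ) * (h i : ℝ) := by
              rw [Finset.sum_const, Nat.card_Icc]; simp [nsmul_eq_mul]
      calc ∑ j ∈ Finset.Icc 1 (τ i), (c i j : ℝ) ≤ (τ i : ℝ) * (h i : ℝ) := hsum
        _ = (t i : ℝ) * (h i : ℝ) * y i := by
            rw [mul_comm ((t i:ℝ)) ((h i:ℝ)), mul_assoc, hty, mul_comm]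
    exact hle.trans (hOKPH.2 hmem)
  -- Part 2
  obtain ⟨⟨y1, hy101, hy1T, hy1val⟩, _⟩ := hOKPH
  have part2 : OKPH ≤ OKPH' / g := by
    have hfeas' : ∑ i, t' i * y1 i ≤ (T:ℝ) := by
      refine le_trans (Finset.sum_le_sum fun i _ => ?_) hy1T
      exact mul_le_mul_of_nonneg_right (ht'le i) (hy101 i).1
    have hmem : (∑ i, t' i * (h i : ℝ) * y1 i) ∈
        {v : ℝ | ∃ y : Fin n → ℝ, (∀ i, y i ∈ Set.Icc (0:ℝ) 1) ∧
        ∑ i, t' i * y i ≤ T ∧ v = ∑ i, t' i * (h i : ℝ) * y i} :=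
      ⟨y1, hy101, hfeas', rfl⟩
    have hg' : g * OKPH ≤ ∑ i, t' i * (h i : ℝ) * y1 i := by
      rw [hy1val, Finset.mul_sum]
      refine Finset.sum_le_sum fun i _ => ?_
      have := mul_le_mul_of_nonneg_right (ht'ge i)
        (mul_nonneg (Nat.cast_nonneg (h i)) (hy101 i).1)
      nlinarith [this]
    have := hg'.trans (hOKPH'.2 hmem)
    rw [le_div_iff₀ hg]
    linarith
  -- Part 3
  obtain ⟨⟨y2, hy201, hy2T, hy2val⟩, _⟩ := hOKPH'
  set S := ∑ i, t' i * (h i : ℝ) * yβ i with hS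
  have part3 : OKPH' / g ≤ (1 / (g * β)) * S := by
    set z : Fin n → ℝ := fun i => β * y2 i with hz
    have hz01 : ∀ i, z i ∈ Set.Icc (0:ℝ) 1 := fun i => by
      constructor
      · exact mul_nonneg hβ.le (hy201 i).1
      · calc β * y2 i ≤ 1 * 1 := by
              apply mul_le_mul hβ1 (hy201 i).2 (hy201 i).1 zero_le_one
          _ = 1 := by ring
    have hzT : ∑ i, t' i * z i ≤ β * T := by
      have : ∑ i, t' i * z i = β * ∑ i, t' i * y2 i := by
        rw [Finset.mul_sum]; exact Finset.sum_congr rfl fun i _ => by rw [hz]; ring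
      rw [this]
      exact mul_le_mul_of_nonneg_left hy2T hβ.le
    have hopt := hyβopt z hz01 hzT
    have hz' : ∑ i, t' i * (h i : ℝ) * z i = β * OKPH' := by
      rw [hy2val, Finset.mul_sum]
      exact Finset.sum_congr rfl fun i _ => by rw [hz]; ring
    rw [hz'] at hopt
    have heq : OKPH' / g = (1 / (g * β)) * (β * OKPH') := by
      field_simp
    rw [heq]
    exact mul_le_mul_of_nonneg_left hopt (by positivity)
  -- Part 4
  have part4 : (1 / (g * β)) * S ≤ (C / (g * β * p)) * ∑ ω, w ω * ∑ i ∈ comp ω, infoCut i := by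
    set E := ∑ ω, w ω * ∑ i ∈ comp ω, infoCut i with hE
    set P : Fin n → ℝ := fun i => ∑ ω ∈ Finset.univ.filter (fun ω => i ∈ comp ω), w ω with hP
    have hPnn : ∀ i, 0 ≤ P i := fun i => Finset.sum_nonneg fun ω _ => hw ω
    have key : p * S ≤ C * E := by
      have hterm : ∀ i, p * (t' i * (h i : ℝ) * yβ i) ≤ P i * (C * infoCut i) := by
        intro i
        rcases eq_or_lt_of_le (hyβ01 i).1 with h0 | h0
        · rw [← h0]
          simp only [mul_zero]
          exact mul_nonneg (hPnn i) (mul_nonneg hC.le (hinfo i))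
        · have hple := hp' i h0
          have hnn : 0 ≤ t' i * (h i : ℝ) * yβ i :=
            mul_nonneg (mul_nonneg (ht'pos i).le (Nat.cast_nonneg _)) h0.le
          calc p * (t' i * (h i : ℝ) * yβ i) ≤ P i * (t' i * (h i : ℝ) * yβ i) :=
                mul_le_mul_of_nonneg_right hple hnn
            _ ≤ P i * (C * infoCut i) := by
                refine mul_le_mul_of_nonneg_left ?_ (hPnn i)
                calc t' i * (h i : ℝ) * yβ i ≤ (C * infoCut i) * yβ i :=
                      mul_le_mul_of_nonneg_right (hacc i) h0.le
                  _ ≤ (C * infoCut i) * 1 := mul_le_mul_of_nonneg_left (hyβ01 i).2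
                      (mul_nonneg hC.le (hinfo i))
                  _ = C * infoCut i := by ring
      have hswap : ∑ i, P i * (C * infoCut i) = C * E := by
        have : ∑ i, P i * (C * infoCut i)
            = ∑ i : Fin n, ∑ ω : Ω, (if i ∈ comp ω then w ω * (C * infoCut i) else 0) := by
          refine Finset.sum_congr rfl fun i _ => ?_
          rw [hP]
          simp [Finset.sum_filter, Finset.sum_mul]
        rw [this, Finset.sum_comm, hE, Finset.mul_sum]
        refine Finset.sum_congr rfl fun ω _ => ?_
        rw [← Finset.sum_filter]
        have hf : Finset.univ.filter (fun i => i ∈ comp ω) = comp ω := by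
          ext i; simp
        rw [hf, Finset.mul_sum, Finset.mul_sum]
        exact Finset.sum_congr rfl fun i _ => by ring
      calc p * S = ∑ i, p * (t' i * (h i : ℝ) * yβ i) := by rw [hS, Finset.mul_sum]
        _ ≤ ∑ i, P i * (C * infoCut i) := Finset.sum_le_sum fun i _ => hterm i
        _ = C * E := hswap
    have hgβ : (0:ℝ) < g * β := mul_pos hg hβ
    have hgβp : (0:ℝ) < g * β * p := mul_pos hgβ hp
    rw [one_div, div_eq_mul_inv, mul_comm C, mul_assoc]
    calc (g * β)⁻¹ * S = (g * β * p)⁻¹ * (p * S) := by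
          field_simp
      _ ≤ (g * β * p)⁻¹ * (C * E) :=
          mul_le_mul_of_nonneg_left key (inv_nonneg.mpr hgβp.le)
  exact ⟨part1, part2, part3, part4⟩
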